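/- For every positive integer N and every nonnegative integer k, one has the Gamma-function identity 2^{2Nk} ∏_{j=1}^{N} [Γ(N+j−1) Γ(k+j−1/2)] / [Γ(j−1/2) Γ(k+j+N−1)] = (2^{k(k+1)/2} ∏_{j=1}^{k−1} j!/(2j)!) · ∏_{0 ≤ i < j ≤ k−1} (N + (i+j)/2). -/

import Mathlib

open Finset

/-- `∏_{i=0}^{n-1} (M+1+i) * M! = (M+n)!` -/
lemma prod_shift (M n : ℕ) :
    (∏ i ∈ range n, ((M : ℝ) + 1 + i)) * (M.factorial : ℝ) = ((M + n).factorial : ℝ) := by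
  induction n with
  | zero => simp
  | succ n ih =>
    rw [prod_range_succ, show M + (n+1) = (M+n)+1 from rfl, Nat.factorial_succ]
    push_cast
    linear_combination ((M : ℝ) + 1 + n) * ih

/-- odd product: `∏_{i=0}^{N-1} (2k+2i+1) * 2^N * (k+N)! * (2k)! = (2k+2N)! * k!` -/
lemma prod_odd (k N : ℕ) :
    (∏ i ∈ range N, (2*(k:ℝ) + 2*i + 1)) * 2^N * ((k+N).factorial : ℝ) * (((2*k).factorial : ℝ))
      = ((2*k+2*N).factorial : ℝ) * (k.factorial : ℝ) := by
  induction N with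
  | zero => simp; ring
  | succ N ih =>
    rw [prod_range_succ, show k + (N+1) = (k+N)+1 from rfl, Nat.factorial_succ,
      show 2*k + 2*(N+1) = (2*k+2*N+1)+1 from by ring, Nat.factorial_succ,
      show 2*k+2*N+1 = (2*k+2*N)+1 from rfl, Nat.factorial_succ]
    push_cast
    linear_combination (2*(k:ℝ) + 2*N + 1) * 2 * ((k:ℝ)+N+1) * ih

lemma fact_ne (m : ℕ) : ((m.factorial : ℝ)) ≠ 0 :=
  Nat.cast_ne_zero.mpr (Nat.factorial_ne_zero _)

lemma step (n k : ℕ) :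
    (2:ℝ)^(2*(n+1)) * ∏ j ∈ Icc 1 (n+1), (((k:ℝ) + j - 1/2) / ((k:ℝ) + j + (n+1) - 1))
      = 2^(k+1) * ((k.factorial : ℝ) / ((2*k).factorial : ℝ)) *
          ∏ i ∈ range k, (((n:ℝ)+1) + ((i:ℝ) + k)/2) := by
  -- convert Icc to range
  rw [show Icc 1 (n+1) = Ico 1 (n+1).succ from by ext x; simp only [mem_Icc, mem_Ico]; omega,
    prod_Ico_eq_prod_range]
  simp only [Nat.succ_sub_one]
  push_cast

  rw [prod_div_distrib]
  -- numerator product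
  have e1 : (∏ i ∈ range (n+1), ((k:ℝ) + (1+i) - 1/2))
      = (∏ i ∈ range (n+1), (2*(k:ℝ) + 2*i + 1)) / 2^(n+1) := by
    rw [eq_div_iff (by positivity),
      show (2:ℝ)^(n+1) = ∏ _i ∈ range (n+1), (2:ℝ) from by simp, ← prod_mul_distrib]
    exact prod_congr rfl fun i _ => by ring
  have h1 := prod_odd k (n+1)
  -- denominator product
  have e2 : (∏ i ∈ range (n+1), ((k:ℝ) + (1+i) + (n+1) - 1))
      = ((k+2*n+1).factorial : ℝ) / ((k+n).factorial : ℝ) := by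
    rw [eq_div_iff (fact_ne _)]
    have := prod_shift (k+n) (n+1)
    rw [show (k+n)+(n+1) = k+2*n+1 from by ring] at this
    rw [← this]
    congr 1
    exact prod_congr rfl fun i _ => by push_cast; ring
  have e3 : (∏ i ∈ range k, (((n:ℝ)+1) + ((i:ℝ) + k)/2))
      = ((2*n+k+1+k).factorial : ℝ) / (((2*n+k+1).factorial : ℝ) * 2^k) := by
    rw [eq_div_iff (mul_ne_zero (fact_ne _) (by positivity))]
    have := prod_shift (2*n+k+1) k
    calc (∏ i ∈ range k, (((n:ℝ)+1) + ((i:ℝ) + k)/2)) * (((2*n+k+1).factorial : ℝ) * 2^k)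
        = ((∏ i ∈ range k, (((n:ℝ)+1) + ((i:ℝ) + k)/2)) * 2^k) * ((2*n+k+1).factorial : ℝ) := by
          ring
      _ = (∏ i ∈ range k, (((2*n+k+1 : ℕ):ℝ) + 1 + i)) * ((2*n+k+1).factorial : ℝ) := by
          rw [show (2:ℝ)^k = ∏ _i ∈ range k, (2:ℝ) from by simp, ← prod_mul_distrib]
          congr 1
          exact prod_congr rfl fun i _ => by push_cast; ring
      _ = ((2*n+k+1+k).factorial : ℝ) := this
  rw [e1, e2, e3]
  -- now pure factorial identity
  have f1 : ((2*k+2*(n+1)).factorial : ℝ) = (2*(k:ℝ)+2*n+2) * ((2*n+k+1+k).factorial : ℝ) := by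
    rw [show 2*k+2*(n+1) = (2*n+k+1+k)+1 from by ring, Nat.factorial_succ]
    push_cast; ring
  have f2 : ((k+(n+1)).factorial : ℝ) = ((k:ℝ)+n+1) * ((k+n).factorial : ℝ) := by
    rw [show k+(n+1) = (k+n)+1 from rfl, Nat.factorial_succ]
    push_cast; ring
  rw [f1, f2] at h1
  have h2n : ((2*n+k+1).factorial : ℝ) = ((k+2*n+1).factorial : ℝ) := by
    rw [show 2*n+k+1 = k+2*n+1 from by ring]
  rw [h2n] at *
  have hc : ((k:ℝ)+n+1) ≠ 0 := by positivity
  have h1' : (∏ i ∈ range (n+1), (2*(k:ℝ) + 2*i + 1)) * 2^(n+1) * ((k+n).factorial : ℝ)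
      * ((2*k).factorial : ℝ) = 2 * ((2*n+k+1+k).factorial : ℝ) * (k.factorial : ℝ) := by
    apply mul_left_cancel₀ hc
    linear_combination h1
  field_simp
  have hP : ∏ x ∈ range (n+1), (2*((k:ℝ)+x)+1) = ∏ i ∈ range (n+1), (2*(k:ℝ)+2*i+1) :=
    prod_congr rfl fun i _ => by ring
  linear_combination (2:ℝ)^(n+1) * 2^k * h1'
    + 4 * (2:ℝ)^(n*2) * 2^k * ((k+n).factorial : ℝ) * ((2*k).factorial : ℝ) * hP

theorem gamma_product_identity (N : ℕ) (hN : 0 < N) (k : ℕ) :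
    (2 : ℝ) ^ (2 * N * k) *
        ∏ j ∈ Finset.Icc 1 N,
          Real.Gamma ((N : ℝ) + (j : ℝ) - 1) * Real.Gamma ((k : ℝ) + (j : ℝ) - 1/2) /
            (Real.Gamma ((j : ℝ) - 1/2) * Real.Gamma ((k : ℝ) + (j : ℝ) + (N : ℝ) - 1)) =
      ((2 : ℝ) ^ (k * (k + 1) / 2) *
          ∏ j ∈ Finset.Icc 1 (k - 1), (j.factorial : ℝ) / ((2 * j).factorial : ℝ)) *
        ∏ j ∈ Finset.range k, ∏ i ∈ Finset.range j,
          ((N : ℝ) + ((i : ℝ) + (j : ℝ)) / 2) := by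
  obtain ⟨n, rfl⟩ : ∃ n, N = n + 1 := ⟨N - 1, by omega⟩
  clear hN
  induction k with
  | zero =>
    simp only [Nat.cast_zero, Nat.mul_zero, mul_zero, pow_zero, zero_add, one_mul,
      Nat.zero_sub, Finset.Icc_self, Finset.range_zero, Finset.prod_empty, mul_one]
    rw [show Finset.Icc 1 0 = (∅ : Finset ℕ) from by simp, prod_empty, mul_one,
      show (0/2 : ℕ) = 0 from rfl, pow_zero]
    refine prod_eq_one fun j hj => ?_
    have hj1 : (1:ℝ) ≤ (j:ℝ) := by exact_mod_cast (mem_Icc.mp hj).1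
    have hn0 : (0:ℝ) ≤ (n:ℝ) := Nat.cast_nonneg n
    have hg1 : Real.Gamma ((j:ℝ) - 1/2) ≠ 0 := ne_of_gt (Real.Gamma_pos_of_pos (by linarith))
    have hg2 : Real.Gamma ((j:ℝ) + ↑(n+1) - 1) ≠ 0 := by
      refine ne_of_gt (Real.Gamma_pos_of_pos ?_)
      push_cast; linarith
    rw [show (↑(n+1):ℝ) + (j:ℝ) - 1 = (j:ℝ) + ↑(n+1) - 1 from by ring, mul_comm,
      div_self (mul_ne_zero hg1 hg2)]
  | succ k ih =>
    have e2 : (k+1)*(k+1+1)/2 = k*(k+1)/2 + (k+1) := by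
      rw [show (k+1)*(k+1+1) = k*(k+1) + 2*(k+1) from by ring,
        Nat.add_mul_div_left _ _ (by norm_num : 0 < 2)]
    rw [show 2*(n+1)*(k+1) = 2*(n+1)*k + 2*(n+1) from by ring, e2, pow_add, pow_add,
      Nat.add_sub_cancel, prod_range_succ]
    have eL : (∏ j ∈ Icc 1 (n+1),
        Real.Gamma ((↑(n+1):ℝ) + (j:ℝ) - 1) * Real.Gamma ((↑(k+1):ℝ) + (j:ℝ) - 1/2) /
          (Real.Gamma ((j:ℝ) - 1/2) * Real.Gamma ((↑(k+1):ℝ) + (j:ℝ) + (↑(n+1):ℝ) - 1)))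
        = (∏ j ∈ Icc 1 (n+1),
            Real.Gamma ((↑(n+1):ℝ) + (j:ℝ) - 1) * Real.Gamma ((k:ℝ) + (j:ℝ) - 1/2) /
              (Real.Gamma ((j:ℝ) - 1/2) * Real.Gamma ((k:ℝ) + (j:ℝ) + (↑(n+1):ℝ) - 1)))
          * ∏ j ∈ Icc 1 (n+1), (((k:ℝ) + (j:ℝ) - 1/2) / ((k:ℝ) + (j:ℝ) + ((n:ℝ)+1) - 1)) := by
      rw [← prod_mul_distrib]
      refine prod_congr rfl fun j hj => ?_
      have hj1 : (1:ℝ) ≤ (j:ℝ) := by exact_mod_cast (mem_Icc.mp hj).1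
      have hn0 : (0:ℝ) ≤ (n:ℝ) := Nat.cast_nonneg n
      have hk0 : (0:ℝ) ≤ (k:ℝ) := Nat.cast_nonneg k
      have ha : ((k:ℝ) + j - 1/2) ≠ 0 := ne_of_gt (by linarith)
      have hb : ((k:ℝ) + j + (↑(n+1):ℝ) - 1) ≠ 0 := ne_of_gt (by push_cast; linarith)
      have hga : Real.Gamma ((↑(k+1):ℝ) + (j:ℝ) - 1/2)
          = ((k:ℝ)+j-1/2) * Real.Gamma ((k:ℝ)+j-1/2) := by
        rw [show (↑(k+1):ℝ) + (j:ℝ) - 1/2 = ((k:ℝ)+j-1/2)+1 from by push_cast; ring,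
          Real.Gamma_add_one ha]
      have hgb : Real.Gamma ((↑(k+1):ℝ) + (j:ℝ) + (↑(n+1):ℝ) - 1)
          = ((k:ℝ)+j+(↑(n+1):ℝ)-1) * Real.Gamma ((k:ℝ)+j+(↑(n+1):ℝ)-1) := by
        rw [show (↑(k+1):ℝ) + (j:ℝ) + (↑(n+1):ℝ) - 1 = ((k:ℝ)+j+(↑(n+1):ℝ)-1)+1
            from by push_cast; ring,
          Real.Gamma_add_one hb]
      rw [hga, hgb]
      have hg1 : Real.Gamma ((j:ℝ) - 1/2) ≠ 0 := ne_of_gt (Real.Gamma_pos_of_pos (by linarith))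
      have hg2 : Real.Gamma ((k:ℝ) + (j:ℝ) + (↑(n+1):ℝ) - 1) ≠ 0 :=
        ne_of_gt (Real.Gamma_pos_of_pos (by push_cast; linarith))
      push_cast at hb hg2 ⊢
      rw [div_mul_div_comm, div_eq_div_iff (mul_ne_zero hg1 (mul_ne_zero hb hg2))
        (mul_ne_zero (mul_ne_zero hg1 hg2) hb)]
      ring
    rw [eL]
    have hsplit : (∏ j ∈ Icc 1 k, ((j.factorial:ℝ)/(((2*j).factorial:ℝ))))
        = (∏ j ∈ Icc 1 (k-1), ((j.factorial:ℝ)/(((2*j).factorial:ℝ)))) *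
            ((k.factorial:ℝ)/(((2*k).factorial:ℝ))) := by
      cases k with
      | zero => norm_num
      | succ m => rw [prod_Icc_succ_top (by omega), Nat.add_sub_cancel]
    rw [hsplit]
    have hst := step n k
    push_cast at ih hst ⊢
    linear_combination
      (2:ℝ)^(2*(n+1)) * (∏ j ∈ Icc 1 (n+1), (((k:ℝ) + (j:ℝ) - 1/2) / ((k:ℝ) + (j:ℝ) + ((n:ℝ)+1) - 1))) * ih
      + ((2:ℝ)^(k*(k+1)/2) * (∏ j ∈ Icc 1 (k-1), ((j.factorial:ℝ)/(((2*j).factorial:ℝ)))) *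
          ∏ j ∈ range k, ∏ i ∈ range j, (((n:ℝ)+1) + ((i:ℝ) + (j:ℝ))/2)) * hst
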